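/- Let G be a connected bipartite graph with bipartition (X, Y) and no sibling pairs, with |X| ≥ 2 and |Y| ≥ 2. Let r ∈ X, let T : X \ {r} → X, and for each x ∈ X \ {r} let y_x ∈ Y be such that (x, y_x) and (T(x), y_x) are edges of G, and suppose every edge of G belongs to at most two of the sets {(x, y_x), (T(x), y_x)} over x ∈ X \ {r}. Let (f_X, f_Y) be a two-layer drawing of G with at most k crossings, and for x ∈ X \ {r} define g(x) = |f_X(x) − f_X(T(x))| − 1. Then (1/4) · Σ_{x ∈ X \ {r}} (g(x) − 1) ≤ k, i.e., Σ_{x ∈ X \ {r}} (g(x) − 1) ≤ 4k. -/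

import Mathlib

open Finset

variable {X Y : Type} [Fintype X] [Fintype Y] [DecidableEq X] [DecidableEq Y]

/-- The adjacency relation on `X ⊕ Y` induced by an edge set `E ⊆ X × Y`. -/
def biAdj (E : Finset (X × Y)) : X ⊕ Y → X ⊕ Y → Prop
  | Sum.inl x, Sum.inr y => (x, y) ∈ E
  | Sum.inr y, Sum.inl x => (x, y) ∈ E
  | _, _ => False

/-- The bipartite graph with parts `X`, `Y` and edge set `E`, as a simple graph on `X ⊕ Y`. -/
def biGraph (E : Finset (X × Y)) : SimpleGraph (X ⊕ Y) where
  Adj := biAdj E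
  symm := by constructor; rintro (x | y) (x' | y') h <;> simp_all [biAdj]
  loopless := by constructor; rintro (x | y) h <;> simp_all [biAdj]

instance (E : Finset (X × Y)) : DecidableRel (biGraph E).Adj := fun u v =>
  match u, v with
  | Sum.inl x, Sum.inr y => (inferInstance : Decidable ((x, y) ∈ E))
  | Sum.inr y, Sum.inl x => (inferInstance : Decidable ((x, y) ∈ E))
  | Sum.inl _, Sum.inl _ => .isFalse (by simp [biGraph, biAdj])
  | Sum.inr _, Sum.inr _ => .isFalse (by simp [biGraph, biAdj])

/-- The crossing number of the two-layer drawing `(fX, fY)` of the bipartite graph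
with edge set `E`: the number of pairs of edges `(x, y)`, `(x', y')` with
`fX x < fX x'` and `fY y' < fY y`. -/
def crossNum (E : Finset (X × Y)) (fX : X ≃ Fin (Fintype.card X))
    (fY : Y ≃ Fin (Fintype.card Y)) : ℕ :=
  ((E ×ˢ E).filter fun p => fX p.1.1 < fX p.2.1 ∧ fY p.2.2 < fY p.1.2).card

/-- A leaf is a vertex of degree one. -/
def IsLeaf (E : Finset (X × Y)) (v : X ⊕ Y) : Prop := (biGraph E).degree v = 1

/-- `G` has no sibling pairs: no two distinct leaves have a common neighbor. -/
def NoSiblingPairs (E : Finset (X × Y)) : Prop :=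
  ∀ u v : X ⊕ Y, u ≠ v → IsLeaf E u → IsLeaf E v →
    ∀ w, ¬ ((biGraph E).Adj u w ∧ (biGraph E).Adj v w)

/-- The bipartite crossing number: the minimum crossing number over all two-layer drawings. -/
noncomputable def bcr (E : Finset (X × Y)) : ℕ :=
  sInf {k | ∃ fX fY, crossNum E fX fY = k}

/-- If `G` is connected with no sibling pairs and `|X|, |Y| ≥ 2`, `T` and the midpoints
`y_x` give paths `P_x` of length two with each edge on at most two of them, and the
drawing `(fX, fY)` has at most `k` crossings, then with
`g x = |fX x - fX (T x)| - 1` we have `∑ (g x - 1) ≤ 4k`. -/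
theorem sum_gap_bound (X Y : Type) [Fintype X] [Fintype Y]
    [DecidableEq X] [DecidableEq Y] (E : Finset (X × Y))
    (hconn : (biGraph E).Connected) (hns : NoSiblingPairs E)
    (hX : 2 ≤ Fintype.card X) (hY : 2 ≤ Fintype.card Y)
    (r : X) (T : {x : X // x ≠ r} → X) (yp : {x : X // x ≠ r} → Y)
    (hpath : ∀ x : {x : X // x ≠ r}, (x.1, yp x) ∈ E ∧ (T x, yp x) ∈ E)
    (hmult : ∀ e ∈ E,
      (Finset.univ.filter fun x : {x : X // x ≠ r} =>
        e = (x.1, yp x) ∨ e = (T x, yp x)).card ≤ 2)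
    (fX : X ≃ Fin (Fintype.card X)) (fY : Y ≃ Fin (Fintype.card Y))
    (k : ℕ) (hk : crossNum E fX fY ≤ k) :
    ∑ x : {x : X // x ≠ r},
        ((|(fX x.1 : ℤ) - (fX (T x) : ℤ)| - 1) - 1) ≤ 4 * (k : ℤ) := by
  classical
  have hYne : Nonempty Y := Fintype.card_pos_iff.mp (by omega)
  -- every vertex of X has a neighbor
  have hdeg : ∀ z : X, ∃ y : Y, (z, y) ∈ E := by
    intro z
    obtain ⟨y0⟩ := hYne
    obtain ⟨w⟩ := hconn.preconnected (Sum.inl z) (Sum.inr y0)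
    cases w with
    | @cons _ v _ h p =>
      rcases v with x' | y
      · simp [biGraph, biAdj] at h
      · exact ⟨y, h⟩
  -- a vertex all of whose edges go to m is a leaf adjacent to m
  have hleaf : ∀ (m : Y) (z : X), (∀ y, (z, y) ∈ E → y = m) →
      IsLeaf E (Sum.inl z) ∧ (biGraph E).Adj (Sum.inl z) (Sum.inr m) := by
    intro m z hz
    obtain ⟨y0, hy0⟩ := hdeg z
    have hme : (z, m) ∈ E := by rwa [hz y0 hy0] at hy0
    have hnb : (biGraph E).neighborFinset (Sum.inl z) = {Sum.inr m} := by
      ext w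
      rcases w with x' | y <;>
        simp only [SimpleGraph.mem_neighborFinset, Finset.mem_singleton]
      · simp only [biGraph, biAdj]
        simp
      · constructor
        · intro h
          have : (z, y) ∈ E := h
          rw [hz y this]
        · intro h
          rw [Sum.inr.injEq] at h
          subst h
          exact hme
    constructor
    · unfold IsLeaf
      rw [SimpleGraph.degree, hnb, Finset.card_singleton]
    · exact hme
  -- at most one such "bad" vertex for each m
  have hbad : ∀ (m : Y) (z z' : X),
      (∀ y, (z, y) ∈ E → y = m) → (∀ y, (z', y) ∈ E → y = m) → z = z' := by
    intro m z z' hz hz'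
    by_contra hne
    obtain ⟨hl, ha⟩ := hleaf m z hz
    obtain ⟨hl', ha'⟩ := hleaf m z' hz'
    exact hns (Sum.inl z) (Sum.inl z') (by simpa using hne) hl hl' (Sum.inr m) ⟨ha, ha'⟩
  -- counting points strictly between two positions
  have key : ∀ a b : Fin (Fintype.card X), a < b →
      ((Finset.univ.filter fun z : X => a < fX z ∧ fX z < b).card : ℤ)
        = (b : ℤ) - (a : ℤ) - 1 := by
    intro a b hab
    have himg : (Finset.univ.filter fun z : X => a < fX z ∧ fX z < b)
        = (Finset.Ioo a b).image fX.symm := by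
      ext z
      simp only [Finset.mem_filter, Finset.mem_univ, true_and, Finset.mem_image,
        Finset.mem_Ioo]
      constructor
      · intro h
        exact ⟨fX z, h, fX.symm_apply_apply z⟩
      · rintro ⟨i, hi, rfl⟩
        simpa using hi
    rw [himg, Finset.card_image_of_injective _ fX.symm.injective, Fin.card_Ioo]
    have : (a : ℕ) < (b : ℕ) := hab
    push_cast [Nat.cast_sub, this]
    omega
  set Bet : {x : X // x ≠ r} → X → Prop := fun x z =>
    (fX x.1 < fX z ∧ fX z < fX (T x)) ∨ (fX (T x) < fX z ∧ fX z < fX x.1) with hBet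
  set Good : {x : X // x ≠ r} → X → Prop := fun x z =>
    ∃ y, (z, y) ∈ E ∧ y ≠ yp x with hGood
  -- Claim A
  have claimA : ∀ x : {x : X // x ≠ r},
      (|(fX x.1 : ℤ) - (fX (T x) : ℤ)| - 1) - 1
        ≤ ((Finset.univ.filter fun z => Bet x z ∧ Good x z).card : ℤ) := by
    intro x
    -- bad vertices: between, all edges to yp x
    have hbad1 : ((Finset.univ.filter fun z => Bet x z ∧ ¬ Good x z).card : ℤ) ≤ 1 := by
      have : (Finset.univ.filter fun z => Bet x z ∧ ¬ Good x z).card ≤ 1 := by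
        apply Finset.card_le_one.mpr
        intro z hz z' hz'
        simp only [Finset.mem_filter, hGood, not_exists, not_and, not_not] at hz hz'
        exact hbad (yp x) z z' hz.2.2 hz'.2.2
      exact_mod_cast this
    have hsplit : ((Finset.univ.filter fun z => Bet x z).card : ℤ)
        ≤ ((Finset.univ.filter fun z => Bet x z ∧ Good x z).card : ℤ)
          + ((Finset.univ.filter fun z => Bet x z ∧ ¬ Good x z).card : ℤ) := by
      have := Finset.card_filter_add_card_filter_not
        (s := Finset.univ.filter fun z : X => Bet x z) (p := fun z => Good x z)
      rw [Finset.filter_filter, Finset.filter_filter] at this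
      push_cast [← this]
      omega
    have hBetCard : |(fX x.1 : ℤ) - (fX (T x) : ℤ)| - 1
        ≤ ((Finset.univ.filter fun z => Bet x z).card : ℤ) := by
      rcases lt_trichotomy (fX x.1) (fX (T x)) with h | h | h
      · have heq : (Finset.univ.filter fun z => Bet x z)
            = Finset.univ.filter fun z : X => fX x.1 < fX z ∧ fX z < fX (T x) := by
          apply Finset.filter_congr
          intro z _
          simp only [hBet]
          constructor
          · rintro (h1 | h2)
            · exact h1
            · exact absurd (h2.1.trans h2.2) (asymm h)
          · exact Or.inl
        rw [heq, key _ _ h]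
        have : ((fX x.1 : Fin (Fintype.card X)) : ℤ) < ((fX (T x) : Fin (Fintype.card X)) : ℤ) := by exact_mod_cast h
        rw [abs_of_nonpos (by omega)]
        omega
      · have he : |((fX x.1 : ℕ) : ℤ) - ((fX (T x) : ℕ) : ℤ)| - 1 ≤ 0 := by
          rw [h]
          simp
        have h0 : (0 : ℤ) ≤ ((Finset.univ.filter fun z => Bet x z).card : ℤ) := by positivity
        omega
      · have heq : (Finset.univ.filter fun z => Bet x z)
            = Finset.univ.filter fun z : X => fX (T x) < fX z ∧ fX z < fX x.1 := by
          apply Finset.filter_congr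
          intro z _
          simp only [hBet]
          constructor
          · rintro (h1 | h2)
            · exact absurd (h1.1.trans h1.2) (asymm h)
            · exact h2
          · exact Or.inr
        rw [heq, key _ _ h]
        have : ((fX (T x) : Fin (Fintype.card X)) : ℤ) < ((fX x.1 : Fin (Fintype.card X)) : ℤ) := by exact_mod_cast h
        rw [abs_of_nonneg (by omega)]
    omega
  -- the global set S of (x, z) pairs
  set S : Finset ({x : X // x ≠ r} × X) :=
    Finset.univ.filter fun p => Bet p.1 p.2 ∧ Good p.1 p.2 with hS
  have hsum : ∑ x : {x : X // x ≠ r},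
      ((Finset.univ.filter fun z => Bet x z ∧ Good x z).card : ℤ) = (S.card : ℤ) := by
    rw [hS, Finset.card_filter, Fintype.sum_prod_type]
    push_cast [Finset.card_filter]
    rfl
  -- the witness function
  have hchoice : ∀ p : {x : X // x ≠ r} × X, Good p.1 p.2 →
      ∃ y : Y, (p.2, y) ∈ E ∧ y ≠ yp p.1 := fun p h => h
  set yw : {x : X // x ≠ r} × X → Y := fun p =>
    if h : Good p.1 p.2 then (hchoice p h).choose else Classical.arbitrary Y with hyw
  have hywE : ∀ p : {x : X // x ≠ r} × X, Good p.1 p.2 →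
      (p.2, yw p) ∈ E ∧ yw p ≠ yp p.1 := by
    intro p h
    rw [hyw]
    simp only [h, dif_pos]
    exact (hchoice p h).choose_spec
  set φ : {x : X // x ≠ r} × X → (X × Y) × (X × Y) := fun p =>
    if fY (yw p) < fY (yp p.1) then
      (if fX p.1.1 < fX p.2 then ((p.1.1, yp p.1), (p.2, yw p))
        else ((T p.1, yp p.1), (p.2, yw p)))
    else
      ((p.2, yw p), if fX p.2 < fX (T p.1) then (T p.1, yp p.1) else (p.1.1, yp p.1))
    with hφ
  set C : Finset ((X × Y) × (X × Y)) :=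
    (E ×ˢ E).filter fun p => fX p.1.1 < fX p.2.1 ∧ fY p.2.2 < fY p.1.2 with hC
  have hmaps : ∀ p ∈ S, φ p ∈ C := by
    rintro ⟨x, z⟩ hp
    rw [hS] at hp
    simp only [Finset.mem_filter] at hp
    obtain ⟨-, hb, hg⟩ := hp
    obtain ⟨hzE, hzne⟩ := hywE (x, z) hg
    have hyne : fY (yw (x, z)) ≠ fY (yp x) := fun h => hzne (fY.injective h)
    obtain ⟨hx1, hx2⟩ := hpath x
    rw [hφ, hC]
    dsimp only
    by_cases hw : fY (yw (x, z)) < fY (yp x)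
    · rw [if_pos hw]
      rcases hb with ⟨h1, h2⟩ | ⟨h1, h2⟩
      · rw [if_pos h1]
        simp only [Finset.mem_filter, Finset.mem_product]
        exact ⟨⟨hx1, hzE⟩, h1, hw⟩
      · rw [if_neg (by exact fun hh => absurd (h2.trans hh) (lt_irrefl _))]
        simp only [Finset.mem_filter, Finset.mem_product]
        exact ⟨⟨hx2, hzE⟩, h1, hw⟩
    · rw [if_neg hw]
      have hw' : fY (yp x) < fY (yw (x, z)) := lt_of_le_of_ne (not_lt.mp hw) (Ne.symm hyne)
      rcases hb with ⟨h1, h2⟩ | ⟨h1, h2⟩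
      · rw [if_pos h2]
        simp only [Finset.mem_filter, Finset.mem_product]
        exact ⟨⟨hzE, hx2⟩, h2, hw'⟩
      · rw [if_neg (by exact fun hh => absurd (hh.trans h1) (lt_irrefl _))]
        simp only [Finset.mem_filter, Finset.mem_product]
        exact ⟨⟨hzE, hx1⟩, h2, hw'⟩
  have hfiber : ∀ c ∈ C, (S.filter fun p => φ p = c).card ≤ 4 := by
    rintro ⟨e1, e2⟩ hc
    rw [hC] at hc
    simp only [Finset.mem_filter, Finset.mem_product] at hc
    obtain ⟨⟨he1, he2⟩, -⟩ := hc
    set F1 : Finset {x : X // x ≠ r} :=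
      Finset.univ.filter fun x => e1 = (x.1, yp x) ∨ e1 = (T x, yp x) with hF1
    set F2 : Finset {x : X // x ≠ r} :=
      Finset.univ.filter fun x => e2 = (x.1, yp x) ∨ e2 = (T x, yp x) with hF2
    have hsub : (S.filter fun p => φ p = (e1, e2))
        ⊆ (F1.image fun x => (x, e2.1)) ∪ (F2.image fun x => (x, e1.1)) := by
      rintro ⟨x, z⟩ hp
      simp only [Finset.mem_filter] at hp
      obtain ⟨-, hpeq⟩ := hp
      rw [hφ] at hpeq
      dsimp only at hpeq
      by_cases hw : fY (yw (x, z)) < fY (yp x)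
      · rw [if_pos hw] at hpeq
        apply Finset.mem_union_left
        simp only [Finset.mem_image]
        refine ⟨x, ?_, ?_⟩
        · rw [hF1]
          simp only [Finset.mem_filter, Finset.mem_univ, true_and]
          by_cases hh : fX x.1 < fX z
          · rw [if_pos hh] at hpeq
            exact Or.inl (congrArg Prod.fst hpeq).symm
          · rw [if_neg hh] at hpeq
            exact Or.inr (congrArg Prod.fst hpeq).symm
        · have : (z, yw (x, z)) = e2 := by
            by_cases hh : fX x.1 < fX z
            · rw [if_pos hh] at hpeq; exact congrArg Prod.snd hpeq
            · rw [if_neg hh] at hpeq; exact congrArg Prod.snd hpeq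
          rw [Prod.mk.injEq]
          exact ⟨rfl, (congrArg Prod.fst this).symm⟩
      · rw [if_neg hw] at hpeq
        apply Finset.mem_union_right
        simp only [Finset.mem_image]
        refine ⟨x, ?_, ?_⟩
        · rw [hF2]
          simp only [Finset.mem_filter, Finset.mem_univ, true_and]
          by_cases hh : fX z < fX (T x)
          · rw [if_pos hh] at hpeq
            exact Or.inr (congrArg Prod.snd hpeq).symm
          · rw [if_neg hh] at hpeq
            exact Or.inl (congrArg Prod.snd hpeq).symm
        · have : (z, yw (x, z)) = e1 := congrArg Prod.fst hpeq
          rw [Prod.mk.injEq]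
          exact ⟨rfl, (congrArg Prod.fst this).symm⟩
    calc (S.filter fun p => φ p = (e1, e2)).card
        ≤ ((F1.image fun x => (x, e2.1)) ∪ (F2.image fun x => (x, e1.1))).card :=
          Finset.card_le_card hsub
      _ ≤ (F1.image fun x => (x, e2.1)).card + (F2.image fun x => (x, e1.1)).card :=
          Finset.card_union_le _ _
      _ ≤ F1.card + F2.card :=
          Nat.add_le_add (Finset.card_image_le) (Finset.card_image_le)
      _ ≤ 2 + 2 := Nat.add_le_add (hmult e1 he1) (hmult e2 he2)
      _ = 4 := rfl
  have hCk : C.card ≤ k := by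
    rw [hC]
    exact hk
  have hScard : S.card ≤ 4 * k := by
    calc S.card ≤ 4 * C.card := Finset.card_le_mul_card_image_of_maps_to hmaps 4 hfiber
      _ ≤ 4 * k := Nat.mul_le_mul_left 4 hCk
  calc ∑ x : {x : X // x ≠ r}, ((|(fX x.1 : ℤ) - (fX (T x) : ℤ)| - 1) - 1)
      ≤ ∑ x : {x : X // x ≠ r},
          ((Finset.univ.filter fun z => Bet x z ∧ Good x z).card : ℤ) :=
        Finset.sum_le_sum fun x _ => claimA x
    _ = (S.card : ℤ) := hsum
    _ ≤ 4 * (k : ℤ) := by exact_mod_cast hScard
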